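/- Let n = 2m for some m ∈ ℤ_{>0}, and fix a count vector v = (v₁₁, 1, 1, v₀₀) or v = (v₁₁, 0, 2, v₀₀) with entries summing to n. Then the probability mass function of T(v, Z) is symmetric–decreasing on the lattice m^{-1}ℤ. -/

import Mathlib

open Finset

/-- Real value of a binary outcome. -/
noncomputable def b2r (b : Bool) : ℝ := if b then 1 else 0

/-- All assignments of `n` subjects in which exactly `m` receive treatment. -/
def Assign (n m : ℕ) : Finset (Fin n → Bool) :=
  Finset.univ.filter fun z => (Finset.univ.filter fun i => z i = true).card = m

/-- Probability of the event `E` under the uniform distribution on `Assign n m`. -/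
noncomputable def Pr (n m : ℕ) (E : (Fin n → Bool) → Prop) : ℝ :=
  haveI : DecidablePred E := fun z => Classical.propDecidable (E z)
  (((Assign n m).filter E).card : ℝ) / ((Assign n m).card : ℝ)

/-- The sample average treatment effect `τ(w)`.  For a table `w`, `(w i).1` is the
control potential outcome `w_i(0)` and `(w i).2` is the treatment potential outcome
`w_i(1)`. -/
noncomputable def sate (n : ℕ) (w : Fin n → Bool × Bool) : ℝ :=
  (∑ j, (b2r (w j).2 - b2r (w j).1)) / (n : ℝ)

/-- Observed outcomes generated by the table `w` under the assignment `z`. -/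
def obsOutcome (n : ℕ) (w : Fin n → Bool × Bool) (z : Fin n → Bool) : Fin n → Bool :=
  fun j => if z j then (w j).2 else (w j).1

/-- The Neyman difference-in-means estimator `T(Y, z)`. -/
noncomputable def neyman (n m : ℕ) (Y z : Fin n → Bool) : ℝ :=
  (∑ j, if z j then b2r (Y j) else 0) / (m : ℝ)
    - (∑ j, if z j then 0 else b2r (Y j)) / ((n : ℝ) - (m : ℝ))

/-- Permutation `p`-value of the table `w` given observed data `(Y, z)`. -/
noncomputable def pval (n m : ℕ) (w : Fin n → Bool × Bool) (Y z : Fin n → Bool) : ℝ :=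
  Pr n m fun z' =>
    |neyman n m (obsOutcome n w z') z' - sate n w| ≥ |neyman n m Y z - sate n w|

/-- The table `w` is possible given the observed data `(Y, z)`. -/
def PossibleTable (n : ℕ) (w : Fin n → Bool × Bool) (Y z : Fin n → Bool) : Prop :=
  ∀ j, (z j = true → (w j).2 = Y j) ∧ (z j = false → (w j).1 = Y j)

/-- Lower endpoint `L_α` of the exact confidence interval `I_α`. -/
noncomputable def Lb (n m : ℕ) (α : ℝ) (Y z : Fin n → Bool) : ℝ :=
  sInf {t : ℝ | ∃ w, PossibleTable n w Y z ∧ α ≤ pval n m w Y z ∧ sate n w = t}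

/-- Upper endpoint `U_α` of the exact confidence interval `I_α`. -/
noncomputable def Ub (n m : ℕ) (α : ℝ) (Y z : Fin n → Bool) : ℝ :=
  sSup {t : ℝ | ∃ w, PossibleTable n w Y z ∧ α ≤ pval n m w Y z ∧ sate n w = t}

/-- `vcount n w a b` is the number of subjects whose treatment potential outcome is `a`
and whose control potential outcome is `b`; e.g. `vcount n w true false = v₁₀`. -/
def vcount (n : ℕ) (w : Fin n → Bool × Bool) (a b : Bool) : ℕ :=
  (Finset.univ.filter fun i => (w i).2 = a ∧ (w i).1 = b).card

/-- `ncount n Y z a b = n_{ab}`, the number of subjects with assignment `a` and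
observed outcome `b`. -/
def ncount (n : ℕ) (Y z : Fin n → Bool) (a b : Bool) : ℕ :=
  (Finset.univ.filter fun j => z j = a ∧ Y j = b).card

/-- The pmf of the Neyman estimator `T(w, Z)` under the uniform random assignment. -/
noncomputable def pmfT (n m : ℕ) (w : Fin n → Bool × Bool) : ℝ → ℝ :=
  fun t => Pr n m fun z => neyman n m (obsOutcome n w z) z = t

/-- The lattice `m⁻¹ ℤ ⊆ ℝ`. -/
def lattZ (m : ℕ) : Set ℝ := {x | ∃ k : ℤ, x = (k : ℝ) / (m : ℝ)}

/-- The lattice `m⁻¹ (2ℤ) ⊆ ℝ`. -/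
def lattEven (m : ℕ) : Set ℝ := {x | ∃ k : ℤ, x = (2 * (k : ℝ)) / (m : ℝ)}

/-- The lattice `m⁻¹ (2ℤ + 1) ⊆ ℝ`. -/
def lattOdd (m : ℕ) : Set ℝ := {x | ∃ k : ℤ, x = (2 * (k : ℝ) + 1) / (m : ℝ)}

/-- `f` is symmetric about `μ` and decreasing away from `μ` along the lattice `L`
(symmetric–decreasing, SD). -/
def SDon (f : ℝ → ℝ) (L : Set ℝ) (μ : ℝ) : Prop :=
  (∀ x : ℝ, μ + x ∈ L → f (μ - x) = f (μ + x)) ∧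
    ∀ x y : ℝ, 0 ≤ x → x ≤ y → μ + x ∈ L → μ + y ∈ L → f (μ + y) ≤ f (μ + x)

/-- In a balanced design, for a count vector of the form
`v = (v₁₁, 1, 1, v₀₀)` or `v = (v₁₁, 0, 2, v₀₀)`, the pmf of `T(v, Z)` is
symmetric–decreasing on the lattice `m⁻¹ℤ`. -/

lemma chooseMono {b j : ℕ} (h : 2*j + 1 ≤ b) : b.choose j ≤ b.choose (j+1) := by
  rcases eq_or_lt_of_le h with h' | h'
  · have hj : j + 1 ≤ b := by omega
    have e : b - (j+1) = j := by omega
    rw [← Nat.choose_symm hj, e]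
  · exact Nat.choose_le_succ_of_lt_half_left (by omega)

lemma chooseAnti {a i : ℕ} (h : a ≤ 2*i + 1) : a.choose (i+1) ≤ a.choose i := by
  by_cases hia : i + 1 ≤ a
  · have h2 := chooseMono (b := a) (j := a - (i+1)) (by omega)
    have e2 : a - (i+1) + 1 = a - i := by omega
    rw [e2, Nat.choose_symm hia, Nat.choose_symm (by omega)] at h2
    exact h2
  · rw [Nat.choose_eq_zero_of_lt (show a < i+1 by omega)]; exact Nat.zero_le _

variable {α : Type*} [DecidableEq α]

/-- number of subsets `T` of `P ∪ R` with `T.card = μ` and `(T ∩ P).card = σ`. -/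
def cntPR (P R : Finset α) (μ σ : ℕ) : ℕ :=
  (((P ∪ R).powerset).filter (fun T => T.card = μ ∧ (T ∩ P).card = σ)).card

lemma cntPR_eq {P R : Finset α} (hPR : Disjoint P R) (i c : ℕ) :
    cntPR P R (i + c) i = P.card.choose i * R.card.choose c := by
  rw [← Finset.card_powersetCard i P, ← Finset.card_powersetCard c R, ← Finset.card_product]
  unfold cntPR
  apply Finset.card_nbij' (fun T => (T ∩ P, T ∩ R)) (fun pr => pr.1 ∪ pr.2)
  · intro T hT
    simp only [Finset.mem_coe, Finset.mem_filter, Finset.mem_powerset] at hT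
    obtain ⟨hsub, hcard, hP⟩ := hT
    have hsplit : (T ∩ P) ∪ (T ∩ R) = T := by
      rw [← Finset.inter_union_distrib_left]
      exact Finset.inter_eq_left.mpr hsub
    have hdisj : Disjoint (T ∩ P) (T ∩ R) :=
      (hPR.mono_left Finset.inter_subset_right).mono_right Finset.inter_subset_right
    have hc : (T ∩ P).card + (T ∩ R).card = T.card := by
      rw [← Finset.card_union_of_disjoint hdisj, hsplit]
    simp only [Finset.mem_coe, Finset.mem_product, Finset.mem_powersetCard]
    exact ⟨⟨Finset.inter_subset_right, hP⟩, ⟨Finset.inter_subset_right, by omega⟩⟩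
  · rintro ⟨A, C⟩ hAC
    simp only [Finset.mem_coe, Finset.mem_product, Finset.mem_powersetCard] at hAC
    obtain ⟨⟨hA, hAc⟩, hC, hCc⟩ := hAC
    have hdAC : Disjoint A C := (hPR.mono_left hA).mono_right hC
    have hdCP : Disjoint C P := (hPR.symm.mono_left hC).mono_right le_rfl
    have h1 : (A ∪ C) ∩ P = A := by
      rw [Finset.union_inter_distrib_right, Finset.inter_eq_left.mpr hA,
        Finset.disjoint_iff_inter_eq_empty.mp hdCP, Finset.union_empty]
    refine Finset.mem_filter.mpr ⟨Finset.mem_powerset.mpr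
      (Finset.union_subset (hA.trans Finset.subset_union_left)
        (hC.trans Finset.subset_union_right)), ?_, ?_⟩
    · rw [Finset.card_union_of_disjoint hdAC]; omega
    · rw [h1]; exact hAc
  · intro T hT
    simp only [Finset.mem_coe, Finset.mem_filter, Finset.mem_powerset] at hT
    beta_reduce; rw [← Finset.inter_union_distrib_left]
    exact Finset.inter_eq_left.mpr hT.1
  · rintro ⟨A, C⟩ hAC
    simp only [Finset.mem_coe, Finset.mem_product, Finset.mem_powersetCard] at hAC
    obtain ⟨⟨hA, hAc⟩, hC, hCc⟩ := hAC
    have hdCP : Disjoint C P := (hPR.symm.mono_left hC).mono_right le_rfl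
    have hdAR : Disjoint A R := (hPR.mono_left hA).mono_right le_rfl
    have h1 : (A ∪ C) ∩ P = A := by
      rw [Finset.union_inter_distrib_right, Finset.inter_eq_left.mpr hA,
        Finset.disjoint_iff_inter_eq_empty.mp hdCP, Finset.union_empty]
    have h2 : (A ∪ C) ∩ R = C := by
      rw [Finset.union_inter_distrib_right, Finset.inter_eq_left.mpr hC,
        Finset.disjoint_iff_inter_eq_empty.mp hdAR, Finset.empty_union]
    simp [h1, h2]

lemma cntPR_zero {P R : Finset α} {μ σ : ℕ} (h : μ < σ) : cntPR P R μ σ = 0 := by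
  unfold cntPR
  rw [Finset.card_eq_zero, Finset.filter_eq_empty_iff]
  rintro T _ ⟨h1, h2⟩
  have h3 : (T ∩ P).card ≤ T.card := Finset.card_le_card Finset.inter_subset_left
  omega
/-- closed formula for the fiber counts. -/
def Ecnt (a bb m s j : ℕ) : ℕ :=
  if j ≤ s ∧ (s - j) % 2 = 0 ∧ j + (s - j)/2 ≤ m then
    a.choose ((s-j)/2) * bb.choose (m - j - (s-j)/2) else 0

/-- total count at level `s`. -/
def Etot (a bb m s : ℕ) : ℕ :=
  Ecnt a bb m s 0 + 2 * Ecnt a bb m s 1 + Ecnt a bb m s 2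

lemma Etot_step {a bb m s : ℕ} (hab : a + 2 + bb = 2*m) (hs : a + 1 ≤ s) :
    Etot a bb m (s+1) ≤ Etot a bb m s := by
  unfold Etot
  by_cases hpar : s % 2 = 0
  · have l0 : Ecnt a bb m (s+1) 0 = 0 := by unfold Ecnt; rw [if_neg]; omega
    have l2 : Ecnt a bb m (s+1) 2 = 0 := by unfold Ecnt; rw [if_neg]; omega
    have r1 : Ecnt a bb m s 1 = 0 := by unfold Ecnt; rw [if_neg]; omega
    rw [l0, l2, r1]
    by_cases hm : 1 + (s+1-1)/2 ≤ m
    · have e1 : (s+1-1)/2 = s/2 := by omega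
      have lv : Ecnt a bb m (s+1) 1 = a.choose (s/2) * bb.choose (m - 1 - s/2) := by
        unfold Ecnt
        rw [if_pos (by omega), e1]
      have r0 : Ecnt a bb m s 0 = a.choose (s/2) * bb.choose (m - s/2) := by
        unfold Ecnt
        rw [if_pos (by omega), show (s-0)/2 = s/2 by omega, show m - 0 - s/2 = m - s/2 by omega]
      have r2 : Ecnt a bb m s 2 = a.choose (s/2 - 1) * bb.choose (m - 1 - s/2) := by
        unfold Ecnt
        rw [if_pos (by omega), show (s-2)/2 = s/2 - 1 by omega, show m - 2 - (s/2 - 1) = m - 1 - s/2 by omega]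
      have ineq1 : a.choose (s/2) * bb.choose (m - 1 - s/2)
          ≤ a.choose (s/2) * bb.choose (m - s/2) := by
        have e : m - s/2 = (m - 1 - s/2) + 1 := by omega
        rw [e]
        exact Nat.mul_le_mul_left _ (chooseMono (by omega))
      have ineq2 : a.choose (s/2) * bb.choose (m - 1 - s/2)
          ≤ a.choose (s/2 - 1) * bb.choose (m - 1 - s/2) := by
        have e : s/2 = (s/2 - 1) + 1 := by omega
        rw [e]
        exact Nat.mul_le_mul_right _ (chooseAnti (by omega))
      rw [lv, r0, r2]
      linarith
    · have lv : Ecnt a bb m (s+1) 1 = 0 := by unfold Ecnt; rw [if_neg]; omega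
      rw [lv]; omega
  · have l1 : Ecnt a bb m (s+1) 1 = 0 := by unfold Ecnt; rw [if_neg]; omega
    have r0 : Ecnt a bb m s 0 = 0 := by unfold Ecnt; rw [if_neg]; omega
    have r2 : Ecnt a bb m s 2 = 0 := by unfold Ecnt; rw [if_neg]; omega
    rw [l1, r0, r2]
    by_cases h0 : (s+1)/2 ≤ m
    · have e0 : Ecnt a bb m (s+1) 0 = a.choose ((s+1)/2) * bb.choose (m - (s+1)/2) := by
        unfold Ecnt
        rw [if_pos (by omega), show (s+1-0)/2 = (s+1)/2 by omega, show m - 0 - (s+1)/2 = m - (s+1)/2 by omega]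
      have e1 : Ecnt a bb m s 1 = a.choose ((s+1)/2 - 1) * bb.choose (m - (s+1)/2) := by
        unfold Ecnt
        rw [if_pos (by omega), show (s-1)/2 = (s+1)/2 - 1 by omega, show m - 1 - ((s+1)/2 - 1) = m - (s+1)/2 by omega]
      have ineqA : a.choose ((s+1)/2) * bb.choose (m - (s+1)/2)
          ≤ a.choose ((s+1)/2 - 1) * bb.choose (m - (s+1)/2) := by
        have e : (s+1)/2 = ((s+1)/2 - 1) + 1 := by omega
        rw [e]
        exact Nat.mul_le_mul_right _ (chooseAnti (by omega))
      by_cases h2 : 2 + (s+1-2)/2 ≤ m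
      · have e2 : Ecnt a bb m (s+1) 2
            = a.choose ((s+1)/2 - 1) * bb.choose (m - 1 - (s+1)/2) := by
          unfold Ecnt
          rw [if_pos (by omega), show (s+1-2)/2 = (s+1)/2 - 1 by omega,
            show m - 2 - ((s+1)/2 - 1) = m - 1 - (s+1)/2 by omega]
        have ineqB : a.choose ((s+1)/2 - 1) * bb.choose (m - 1 - (s+1)/2)
            ≤ a.choose ((s+1)/2 - 1) * bb.choose (m - (s+1)/2) := by
          have e : m - (s+1)/2 = (m - 1 - (s+1)/2) + 1 := by omega
          rw [e]
          exact Nat.mul_le_mul_left _ (chooseMono (by omega))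
        rw [e0, e1, e2]
        linarith
      · have e2 : Ecnt a bb m (s+1) 2 = 0 := by unfold Ecnt; rw [if_neg]; omega
        rw [e0, e1, e2]
        linarith
    · have e0 : Ecnt a bb m (s+1) 0 = 0 := by unfold Ecnt; rw [if_neg]; omega
      have e2 : Ecnt a bb m (s+1) 2 = 0 := by unfold Ecnt; rw [if_neg]; omega
      rw [e0, e2]; omega

lemma Etot_mono {a bb m : ℕ} (hab : a + 2 + bb = 2*m) {t u : ℕ} (h : a + 1 ≤ t)
    (htu : t ≤ u) : Etot a bb m u ≤ Etot a bb m t := by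
  induction u, htu using Nat.le_induction with
  | base => exact le_rfl
  | succ u hu ih => exact le_trans (Etot_step hab (le_trans h hu)) ih
section Decomp
variable {α : Type*} [DecidableEq α] [Fintype α]

lemma fiber_card {P Q R : Finset α} (hPQ : Disjoint P Q) (hQR : Disjoint Q R)
    (hU : P ∪ Q ∪ R = univ) {m s : ℕ} (B : Finset α) (hB : B ⊆ Q)
    {μ σ : ℕ} (hμ : μ + B.card = m) (hσ : 2*σ + B.card = s) :
    ((univ.powerset).filter
      (fun T => (T.card = m ∧ 2*(T ∩ P).card + (T ∩ Q).card = s) ∧ T ∩ Q = B)).card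
      = cntPR P R μ σ := by
  unfold cntPR
  apply Finset.card_nbij' (fun T => T \ Q) (fun T' => T' ∪ B)
  · intro T hT
    simp only [Finset.mem_coe, Finset.mem_filter, Finset.mem_powerset] at hT ⊢
    obtain ⟨-, ⟨hcard, hgs⟩, hTQ⟩ := hT
    have h1 : (T \ Q).card + (T ∩ Q).card = T.card := by
      rw [← Finset.card_union_of_disjoint (Finset.disjoint_sdiff_inter T Q),
        Finset.sdiff_union_inter]
    have h2 : (T \ Q) ∩ P = T ∩ P := by
      ext x
      simp only [Finset.mem_inter, Finset.mem_sdiff]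
      constructor
      · tauto
      · rintro ⟨hxT, hxP⟩
        exact ⟨⟨hxT, fun hq => (Finset.disjoint_left.mp hPQ hxP hq)⟩, hxP⟩
    refine ⟨?_, ?_, ?_⟩
    · intro x hx
      obtain ⟨hxT, hxQ⟩ := Finset.mem_sdiff.mp hx
      have hx2 := Finset.mem_univ x
      rw [← hU] at hx2
      simp only [Finset.mem_union] at hx2 ⊢
      tauto
    · rw [hTQ] at h1; omega
    · rw [h2]; rw [hTQ] at hgs; omega
  · intro T' hT'
    simp only [Finset.mem_coe, Finset.mem_filter, Finset.mem_powerset] at hT' ⊢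
    obtain ⟨hsub, hc, hp⟩ := hT'
    have hdTB : Disjoint T' B := by
      rw [Finset.disjoint_left]
      intro x hx hxB
      rcases Finset.mem_union.mp (hsub hx) with h | h
      · exact Finset.disjoint_left.mp hPQ h (hB hxB)
      · exact Finset.disjoint_left.mp hQR (hB hxB) h
    have hQP : (T' ∪ B) ∩ P = T' ∩ P := by
      ext x
      simp only [Finset.mem_inter, Finset.mem_union]
      constructor
      · rintro ⟨hx | hx, hxP⟩
        · exact ⟨hx, hxP⟩
        · exact absurd hxP (Finset.disjoint_right.mp hPQ (hB hx))
      · tauto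
    have hQQ : (T' ∪ B) ∩ Q = B := by
      ext x
      simp only [Finset.mem_inter, Finset.mem_union]
      constructor
      · rintro ⟨hx | hx, hxQ⟩
        · rcases Finset.mem_union.mp (hsub hx) with h | h
          · exact absurd hxQ (Finset.disjoint_left.mp hPQ h)
          · exact absurd h (Finset.disjoint_left.mp hQR hxQ)
        · exact hx
      · intro hx
        exact ⟨Or.inr hx, hB hx⟩
    refine ⟨Finset.subset_univ _, ⟨?_, ?_⟩, hQQ⟩
    · rw [Finset.card_union_of_disjoint hdTB]; omega
    · rw [hQP, hQQ]; omega
  · intro T hT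
    simp only [Finset.mem_coe, Finset.mem_filter, Finset.mem_powerset] at hT
    beta_reduce; rw [← hT.2.2, Finset.sdiff_union_inter]
  · intro T' hT'
    simp only [Finset.mem_coe, Finset.mem_filter, Finset.mem_powerset] at hT'
    obtain ⟨hsub, -, -⟩ := hT'
    have : Disjoint T' Q := by
      rw [Finset.disjoint_left]
      intro x hx hxQ
      rcases Finset.mem_union.mp (hsub hx) with h | h
      · exact Finset.disjoint_left.mp hPQ h hxQ
      · exact Finset.disjoint_left.mp hQR hxQ h
    beta_reduce; rw [Finset.union_sdiff_distrib, Finset.sdiff_eq_self_of_disjoint this,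
      Finset.sdiff_eq_empty_iff_subset.mpr hB, Finset.union_empty]

lemma fiber_zero {P Q : Finset α} (hPQ : Disjoint P Q) {m s : ℕ} (B : Finset α)
    (h : ∀ μ σ, σ ≤ μ → ¬(μ + B.card = m ∧ 2*σ + B.card = s)) :
    ((univ.powerset).filter
      (fun T => (T.card = m ∧ 2*(T ∩ P).card + (T ∩ Q).card = s) ∧ T ∩ Q = B)).card
      = 0 := by
  rw [Finset.card_eq_zero, Finset.filter_eq_empty_iff]
  rintro T - ⟨⟨hcard, hgs⟩, hTQ⟩
  have h1 : (T \ Q).card + (T ∩ Q).card = T.card := by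
    rw [← Finset.card_union_of_disjoint (Finset.disjoint_sdiff_inter T Q),
      Finset.sdiff_union_inter]
  have h2 : T ∩ P ⊆ T \ Q := by
    intro x hx
    obtain ⟨hxT, hxP⟩ := Finset.mem_inter.mp hx
    exact Finset.mem_sdiff.mpr ⟨hxT, fun hq => Finset.disjoint_left.mp hPQ hxP hq⟩
  have h3 := Finset.card_le_card h2
  rw [hTQ] at h1 hgs
  exact h (T \ Q).card (T ∩ P).card h3 ⟨by omega, by omega⟩

lemma fiber_eq_Ecnt {P Q R : Finset α} (hPQ : Disjoint P Q) (hPR : Disjoint P R)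
    (hQR : Disjoint Q R) (hU : P ∪ Q ∪ R = univ) {m s : ℕ} (B : Finset α) (hB : B ⊆ Q) :
    ((univ.powerset).filter
      (fun T => (T.card = m ∧ 2*(T ∩ P).card + (T ∩ Q).card = s) ∧ T ∩ Q = B)).card
      = Ecnt P.card R.card m s B.card := by
  unfold Ecnt
  by_cases hc : B.card ≤ s ∧ (s - B.card) % 2 = 0 ∧ B.card + (s - B.card)/2 ≤ m
  · rw [if_pos hc]
    obtain ⟨h1, h2, h3⟩ := hc
    rw [fiber_card hPQ hQR hU B hB
      (μ := (s - B.card)/2 + (m - B.card - (s - B.card)/2)) (σ := (s - B.card)/2)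
      (by omega) (by omega)]
    rw [cntPR_eq hPR]
  · rw [if_neg hc]
    apply fiber_zero hPQ
    intro μ σ hle ⟨e1, e2⟩
    omega

/-- the master count. -/
def MM (P Q : Finset α) (m s : ℕ) : ℕ :=
  ((univ.powerset).filter
    (fun T => T.card = m ∧ 2*(T ∩ P).card + (T ∩ Q).card = s)).card

lemma MM_eq {P Q R : Finset α} (hPQ : Disjoint P Q) (hPR : Disjoint P R)
    (hQR : Disjoint Q R) (hU : P ∪ Q ∪ R = univ) (hQ2 : Q.card = 2) (m s : ℕ) :
    MM P Q m s = Etot P.card R.card m s := by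
  unfold MM
  rw [Finset.card_eq_sum_card_fiberwise (f := fun T => T ∩ Q) (t := Q.powerset)
    (fun T _ => Finset.mem_powerset.mpr Finset.inter_subset_right)]
  have hterm : ∀ B ∈ Q.powerset,
      (((univ.powerset).filter
        (fun T => T.card = m ∧ 2*(T ∩ P).card + (T ∩ Q).card = s)).filter
          (fun T => T ∩ Q = B)).card = Ecnt P.card R.card m s B.card := by
    intro B hB
    rw [Finset.filter_filter]
    exact fiber_eq_Ecnt hPQ hPR hQR hU B (Finset.mem_powerset.mp hB)
  rw [Finset.sum_congr rfl hterm]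
  rw [Finset.powerset_card_disjiUnion]; erw [Finset.sum_disjiUnion]
  have hinner : ∀ j ∈ Finset.range (Q.card + 1),
      ∑ B ∈ Q.powersetCard j, Ecnt P.card R.card m s B.card
        = Nat.choose 2 j * Ecnt P.card R.card m s j := by
    intro j hj
    rw [Finset.sum_congr rfl (fun B hB => by
      rw [(Finset.mem_powersetCard.mp hB).2]), Finset.sum_const,
      Finset.card_powersetCard, hQ2, smul_eq_mul]
  rw [Finset.sum_congr rfl hinner, hQ2]
  rw [Finset.sum_range_succ, Finset.sum_range_succ, Finset.sum_range_succ,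
    Finset.sum_range_zero]
  unfold Etot
  norm_num

end Decomp

lemma assign_card_filter (n m : ℕ) (p : Finset (Fin n) → Prop) [DecidablePred p] :
    ((Assign n m).filter (fun z => p (univ.filter (fun j => z j = true)))).card
    = ((univ.powerset (α := Fin n)).filter (fun T => T.card = m ∧ p T)).card := by
  apply Finset.card_nbij' (fun z => univ.filter (fun j => z j = true))
    (fun T => fun j => decide (j ∈ T))
  · intro z hz
    simp only [Finset.mem_coe, Assign, Finset.mem_filter, Finset.mem_univ, true_and] at hz
    simp only [Finset.mem_coe, Finset.mem_filter, Finset.mem_powerset]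
    exact ⟨Finset.subset_univ _, hz.1, hz.2⟩
  · intro T hT
    simp only [Finset.mem_coe, Finset.mem_filter, Finset.mem_powerset] at hT
    have hT' : univ.filter (fun j => decide (j ∈ T) = true) = T := by
      ext j; simp
    simp only [Finset.mem_coe, Assign, Finset.mem_filter, Finset.mem_univ, true_and, hT']
    exact ⟨hT.2.1, hT.2.2⟩
  · intro z hz
    funext j
    simp only [Finset.mem_filter, Finset.mem_univ, true_and]
    cases h : z j <;> simp [h]
  · intro T hT
    ext j; simp
section Analysis
variable (n : ℕ) (w : Fin n → Bool × Bool)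

/-- subjects with control outcome 1 -/
def Wc : Finset (Fin n) := univ.filter (fun j => (w j).1 = true)
/-- subjects with treatment outcome 1 -/
def Wt : Finset (Fin n) := univ.filter (fun j => (w j).2 = true)
def Pset : Finset (Fin n) := univ.filter (fun j => (w j).1 = true ∧ (w j).2 = true)
def Qset : Finset (Fin n) := univ.filter (fun j => ¬ ((w j).1 = (w j).2))
def Rset : Finset (Fin n) := univ.filter (fun j => (w j).1 = false ∧ (w j).2 = false)

lemma inter_filter_univ (T : Finset (Fin n)) (p : Fin n → Prop) [DecidablePred p] :
    T ∩ univ.filter p = T.filter p := by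
  rw [Finset.inter_filter, Finset.inter_univ]

lemma gsplit (T : Finset (Fin n)) :
    (T ∩ Wc n w).card + (T ∩ Wt n w).card
      = 2*(T ∩ Pset n w).card + (T ∩ Qset n w).card := by
  unfold Wc Wt Pset Qset
  rw [inter_filter_univ, inter_filter_univ, inter_filter_univ, inter_filter_univ]
  simp only [Finset.card_filter]
  rw [← Finset.sum_add_distrib, two_mul, ← Finset.sum_add_distrib, ← Finset.sum_add_distrib]
  apply Finset.sum_congr rfl
  intro j _
  cases h1 : (w j).1 <;> cases h2 : (w j).2 <;> simp [h1, h2]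

lemma Psum : (Pset n w).card + (Qset n w).card + (Rset n w).card = n := by
  unfold Pset Qset Rset
  simp only [Finset.card_filter]
  rw [← Finset.sum_add_distrib, ← Finset.sum_add_distrib]
  have : ∀ j ∈ (univ : Finset (Fin n)),
      ((if (w j).1 = true ∧ (w j).2 = true then 1 else 0)
        + (if ¬((w j).1 = (w j).2) then 1 else 0)
        + (if (w j).1 = false ∧ (w j).2 = false then 1 else 0)) = 1 := by
    intro j _
    cases h1 : (w j).1 <;> cases h2 : (w j).2 <;> simp [h1, h2]
  rw [Finset.sum_congr rfl this, Finset.sum_const, smul_eq_mul, mul_one,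
    Finset.card_univ, Fintype.card_fin]

lemma compl_card (z : Fin n → Bool) :
    (univ.filter (fun j => (!z j) = true)).card
      + (univ.filter (fun j => z j = true)).card = n := by
  simp only [Finset.card_filter]
  rw [← Finset.sum_add_distrib]
  have hp : ∀ j ∈ (univ : Finset (Fin n)),
      ((if (!z j) = true then 1 else 0) + (if z j = true then 1 else 0)) = 1 := by
    intro j _
    cases hzj : z j <;> simp [hzj]
  rw [Finset.sum_congr rfl hp, Finset.sum_const, smul_eq_mul, mul_one,
    Finset.card_univ, Fintype.card_fin]

lemma Pcard : (Pset n w).card = vcount n w true true := by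
  unfold Pset vcount
  congr 1
  apply Finset.filter_congr
  intro j _
  tauto

lemma Qcard : (Qset n w).card = vcount n w true false + vcount n w false true := by
  unfold Qset vcount
  simp only [Finset.card_filter]
  rw [← Finset.sum_add_distrib]
  apply Finset.sum_congr rfl
  intro j _
  cases h1 : (w j).1 <;> cases h2 : (w j).2 <;> simp [h1, h2]

lemma Wc_card : (Wc n w).card = vcount n w true true + vcount n w false true := by
  unfold Wc vcount
  simp only [Finset.card_filter]
  rw [← Finset.sum_add_distrib]
  apply Finset.sum_congr rfl
  intro j _
  cases h1 : (w j).1 <;> cases h2 : (w j).2 <;> simp [h1, h2]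

lemma Wt_card : (Wt n w).card = vcount n w true true + vcount n w true false := by
  unfold Wt vcount
  simp only [Finset.card_filter]
  rw [← Finset.sum_add_distrib]
  apply Finset.sum_congr rfl
  intro j _
  cases h1 : (w j).1 <;> cases h2 : (w j).2 <;> simp [h1, h2]

lemma hPQ_disj : Disjoint (Pset n w) (Qset n w) := by
  rw [Finset.disjoint_left]
  intro j hj hj'
  simp only [Pset, Qset, Finset.mem_filter] at hj hj'
  obtain ⟨-, h1, h2⟩ := hj
  exact hj'.2 (h1.trans h2.symm)

lemma hPR_disj : Disjoint (Pset n w) (Rset n w) := by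
  rw [Finset.disjoint_left]
  intro j hj hj'
  simp only [Pset, Rset, Finset.mem_filter] at hj hj'
  rw [hj.2.1] at hj'
  simp at hj'

lemma hQR_disj : Disjoint (Qset n w) (Rset n w) := by
  rw [Finset.disjoint_left]
  intro j hj hj'
  simp only [Qset, Rset, Finset.mem_filter] at hj hj'
  exact hj.2 (hj'.2.1.trans hj'.2.2.symm)

lemma hPQR_univ : Pset n w ∪ Qset n w ∪ Rset n w = univ := by
  ext j
  simp only [Finset.mem_union, Pset, Qset, Rset, Finset.mem_filter, Finset.mem_univ,
    true_and, iff_true]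
  cases h1 : (w j).1 <;> cases h2 : (w j).2 <;> simp [h1, h2]

lemma sum_ite_card (z : Fin n → Bool) (p : Fin n → Bool) :
    (∑ j, if z j then b2r (p j) else 0)
      = ((univ.filter (fun j => z j = true ∧ p j = true)).card : ℝ) := by
  rw [← Finset.sum_boole]
  apply Finset.sum_congr rfl
  intro j _
  cases hz : z j <;> cases hp : p j <;> simp [hz, hp, b2r]

lemma sum_ite_card' (z : Fin n → Bool) (p : Fin n → Bool) :
    (∑ j, if z j then 0 else b2r (p j))
      = ((univ.filter (fun j => ¬(z j = true) ∧ p j = true)).card : ℝ) := by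
  rw [← Finset.sum_boole]
  apply Finset.sum_congr rfl
  intro j _
  cases hz : z j <;> cases hp : p j <;> simp [hz, hp, b2r]

lemma filter_split_card (z : Fin n → Bool) (p : Fin n → Bool) :
    (univ.filter (fun j => z j = true ∧ p j = true)).card
      + (univ.filter (fun j => ¬(z j = true) ∧ p j = true)).card
      = (univ.filter (fun j => p j = true)).card := by
  simp only [Finset.card_filter]
  rw [← Finset.sum_add_distrib]
  apply Finset.sum_congr rfl
  intro j _
  cases hz : z j <;> cases hp : p j <;> simp [hz, hp]

lemma Tz_inter_card (z : Fin n → Bool) (p : Fin n → Bool) :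
    ((univ.filter (fun j => z j = true)) ∩ (univ.filter (fun j => p j = true))).card
      = (univ.filter (fun j => z j = true ∧ p j = true)).card := by
  congr 1
  rw [inter_filter_univ]
  rw [Finset.filter_filter]

lemma ney_eq (m : ℕ) (hm : 0 < m) (hn : n = 2*m) (z : Fin n → Bool) :
    neyman n m (obsOutcome n w z) z
      = ((((univ.filter (fun j => z j = true)) ∩ Wc n w).card
          + ((univ.filter (fun j => z j = true)) ∩ Wt n w).card : ℝ)
          - ((Wc n w).card : ℝ)) / m := by
  have hmR : (m:ℝ) ≠ 0 := Nat.cast_ne_zero.mpr hm.ne'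
  have hnm : (n:ℝ) - (m:ℝ) = m := by
    rw [hn]; push_cast; ring
  unfold neyman
  have e1 : (∑ j, if z j then b2r (obsOutcome n w z j) else 0)
      = ∑ j, if z j then b2r ((w j).2) else 0 := by
    apply Finset.sum_congr rfl
    intro j _
    by_cases hz : z j <;> simp [obsOutcome, hz]
  have e2 : (∑ j, if z j then 0 else b2r (obsOutcome n w z j))
      = ∑ j, if z j then 0 else b2r ((w j).1) := by
    apply Finset.sum_congr rfl
    intro j _
    by_cases hz : z j <;> simp [obsOutcome, hz]
  rw [e1, e2, hnm]
  rw [sum_ite_card n z (fun j => (w j).2), sum_ite_card' n z (fun j => (w j).1)]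
  have e3 : ((univ.filter (fun j => z j = true)) ∩ Wc n w).card
      = (univ.filter (fun j => z j = true ∧ (w j).1 = true)).card := by
    unfold Wc; exact Tz_inter_card n z (fun j => (w j).1)
  have e4 : ((univ.filter (fun j => z j = true)) ∩ Wt n w).card
      = (univ.filter (fun j => z j = true ∧ (w j).2 = true)).card := by
    unfold Wt; exact Tz_inter_card n z (fun j => (w j).2)
  have e5 := filter_split_card n z (fun j => (w j).1)
  have e5' : ((univ.filter (fun j => ¬(z j = true) ∧ (w j).1 = true)).card : ℝ)
      = ((Wc n w).card : ℝ)
        - ((univ.filter (fun j => z j = true ∧ (w j).1 = true)).card : ℝ) := by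
    unfold Wc
    push_cast [← e5]
    ring
  rw [e3, e4, e5']
  field_simp
  ring

lemma sate_eq : sate n w = (((Wt n w).card : ℝ) - ((Wc n w).card : ℝ)) / n := by
  unfold sate
  rw [Finset.sum_sub_distrib]
  congr 1
  · congr 1
    · have := sum_ite_card n (fun _ => true) (fun j => (w j).2)
      simpa [Wt] using this
    · have := sum_ite_card n (fun _ => true) (fun j => (w j).1)
      simpa [Wc] using this
end Analysis

theorem stmt15 (m : ℕ) (hm : 0 < m) (n : ℕ) (hn : n = 2 * m)
    (w : Fin n → Bool × Bool)
    (h : (vcount n w true false = 1 ∧ vcount n w false true = 1) ∨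
      (vcount n w true false = 0 ∧ vcount n w false true = 2)) :
    SDon (pmfT n m w) (lattZ m) (sate n w) := by
  have hmR : (m:ℝ) ≠ 0 := Nat.cast_ne_zero.mpr hm.ne'
  have hmR' : (0:ℝ) < m := by exact_mod_cast hm
  have hnR : (n:ℝ) = 2*(m:ℝ) := by rw [hn]; push_cast; ring
  set a := vcount n w true true with ha
  have hq2 : (Qset n w).card = 2 := by
    rw [Qcard]; rcases h with ⟨h1,h2⟩|⟨h1,h2⟩ <;> omega
  have hW : (Wc n w).card + (Wt n w).card = 2*a + 2 := by
    rw [Wc_card, Wt_card]; rcases h with ⟨h1,h2⟩|⟨h1,h2⟩ <;> omega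
  have hab : (Pset n w).card + 2 + (Rset n w).card = 2*m := by
    have h1 := Psum n w
    rw [hq2] at h1
    omega
  -- denominator
  have hAssign : (Assign n m).card = n.choose m := by
    have h0 := assign_card_filter n m (fun _ => True)
    simpa [Finset.filter_true, and_true, ← Finset.powersetCard_eq_filter,
      Finset.card_powersetCard] using h0
  have hApos : (0:ℝ) < ((Assign n m).card : ℝ) := by
    rw [hAssign]
    exact_mod_cast Nat.choose_pos (by omega)
  -- the Neyman estimator through counts
  have hg : ∀ z : Fin n → Bool,
      neyman n m (obsOutcome n w z) z
        = (((2*((univ.filter (fun j => z j = true)) ∩ Pset n w).card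
            + ((univ.filter (fun j => z j = true)) ∩ Qset n w).card : ℕ) : ℝ)
            - ((Wc n w).card : ℝ)) / m := by
    intro z
    rw [ney_eq n w m hm hn z]
    congr 1
    rw [sub_left_inj]
    exact_mod_cast gsplit n w _
  have hWR : ((Wc n w).card:ℝ) + ((Wt n w).card:ℝ) = 2*(a:ℝ) + 2 := by
    exact_mod_cast hW
  -- arithmetic equivalence
  have hsate_m : sate n w
      = ((((Wt n w).card:ℝ) - ((Wc n w).card:ℝ))/2)/(m:ℝ) := by
    rw [sate_eq n w, hnR]
    field_simp
  have harith : ∀ (G : ℕ) (k : ℤ),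
      (((G:ℝ) - ((Wc n w).card:ℝ))/m = sate n w + (k:ℝ)/m) ↔ (G:ℝ) = (a:ℝ) + 1 + (k:ℝ) := by
    intro G k
    rw [hsate_m, ← add_div, div_left_inj' hmR]
    constructor
    · intro hh
      linarith
    · intro hh
      linarith
  -- key counting identity
  have hKey : ∀ k : ℤ, 0 ≤ k → pmfT n m w (sate n w + (k:ℝ)/m)
      = ((MM (Pset n w) (Qset n w) m (a + 1 + k.toNat) : ℕ) : ℝ)
        / ((Assign n m).card : ℝ) := by
    intro k hk
    unfold pmfT Pr
    congr 2
    rw [Finset.filter_congr (q := fun z =>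
      2*((univ.filter (fun j => z j = true)) ∩ Pset n w).card
        + ((univ.filter (fun j => z j = true)) ∩ Qset n w).card = a + 1 + k.toNat) ?_]
    · exact assign_card_filter n m
        (fun T => 2*(T ∩ Pset n w).card + (T ∩ Qset n w).card = a + 1 + k.toNat)
    · intro z _
      rw [hg z, harith _ k]
      have hcast : ((a + 1 + k.toNat : ℕ) : ℝ) = (a:ℝ) + 1 + (k:ℝ) := by
        have h5 : ((k.toNat : ℕ) : ℝ) = (k : ℝ) := by
          exact_mod_cast Int.toNat_of_nonneg hk
        push_cast [h5]
        ring
      rw [← hcast]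
      exact Nat.cast_inj
  -- symmetry
  have hsym : ∀ x : ℝ, pmfT n m w (sate n w - x) = pmfT n m w (sate n w + x) := by
    intro x
    unfold pmfT Pr
    congr 2
    apply Finset.card_nbij' (fun z => fun j => !(z j)) (fun z => fun j => !(z j))
    · intro z hz
      simp only [Finset.mem_coe, Finset.mem_filter] at hz ⊢
      obtain ⟨hzA, hzv⟩ := hz
      have hflip : (univ.filter (fun j => (!z j) = true))
          = univ.filter (fun j => ¬(z j = true)) := by
        apply Finset.filter_congr
        intro j _
        cases hzj : z j <;> simp [hzj]
      constructor
      · simp only [Assign, Finset.mem_filter, Finset.mem_univ, true_and] at hzA ⊢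
        have hsplit := compl_card n z
        omega
      · -- value flips around the mean
        have e3 : ∀ (u : Fin n → Bool),
            ((univ.filter (fun j => u j = true)) ∩ Wc n w).card
              = (univ.filter (fun j => u j = true ∧ (w j).1 = true)).card := by
          intro u
          unfold Wc
          exact Tz_inter_card n u (fun j => (w j).1)
        have e4 : ∀ (u : Fin n → Bool),
            ((univ.filter (fun j => u j = true)) ∩ Wt n w).card
              = (univ.filter (fun j => u j = true ∧ (w j).2 = true)).card := by
          intro u
          unfold Wt
          exact Tz_inter_card n u (fun j => (w j).2)
        have hneg : ∀ (p : Fin n → Bool),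
            (univ.filter (fun j => (!z j) = true ∧ p j = true)).card
              = (univ.filter (fun j => ¬(z j = true) ∧ p j = true)).card := by
          intro p
          congr 1
          apply Finset.filter_congr
          intro j _
          cases hzj : z j <;> simp [hzj]
        have r1 : ((univ.filter (fun j => (!z j) = true)) ∩ Wc n w).card
            + ((univ.filter (fun j => z j = true)) ∩ Wc n w).card
            = (Wc n w).card := by
          rw [e3, e3, hneg]
          have := filter_split_card n z (fun j => (w j).1)
          unfold Wc
          omega
        have r2 : ((univ.filter (fun j => (!z j) = true)) ∩ Wt n w).card
            + ((univ.filter (fun j => z j = true)) ∩ Wt n w).card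
            = (Wt n w).card := by
          rw [e4, e4, hneg]
          have := filter_split_card n z (fun j => (w j).2)
          unfold Wt
          omega
        rw [ney_eq n w m hm hn] at hzv ⊢
        rw [hsate_m] at hzv ⊢
        have r1R : (((univ.filter (fun j => (!z j) = true)) ∩ Wc n w).card : ℝ)
            = ((Wc n w).card : ℝ)
              - (((univ.filter (fun j => z j = true)) ∩ Wc n w).card : ℝ) := by
          push_cast [← r1]; ring
        have r2R : (((univ.filter (fun j => (!z j) = true)) ∩ Wt n w).card : ℝ)
            = ((Wt n w).card : ℝ)
              - (((univ.filter (fun j => z j = true)) ∩ Wt n w).card : ℝ) := by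
          push_cast [← r2]; ring
        rw [r1R, r2R]
        linear_combination -hzv
    · intro z hz
      simp only [Finset.mem_coe, Finset.mem_filter] at hz ⊢
      obtain ⟨hzA, hzv⟩ := hz
      have hflip : (univ.filter (fun j => (!z j) = true))
          = univ.filter (fun j => ¬(z j = true)) := by
        apply Finset.filter_congr
        intro j _
        cases hzj : z j <;> simp [hzj]
      constructor
      · simp only [Assign, Finset.mem_filter, Finset.mem_univ, true_and] at hzA ⊢
        have hsplit := compl_card n z
        omega
      · have e3 : ∀ (u : Fin n → Bool),
            ((univ.filter (fun j => u j = true)) ∩ Wc n w).card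
              = (univ.filter (fun j => u j = true ∧ (w j).1 = true)).card := by
          intro u
          unfold Wc
          exact Tz_inter_card n u (fun j => (w j).1)
        have e4 : ∀ (u : Fin n → Bool),
            ((univ.filter (fun j => u j = true)) ∩ Wt n w).card
              = (univ.filter (fun j => u j = true ∧ (w j).2 = true)).card := by
          intro u
          unfold Wt
          exact Tz_inter_card n u (fun j => (w j).2)
        have hneg : ∀ (p : Fin n → Bool),
            (univ.filter (fun j => (!z j) = true ∧ p j = true)).card
              = (univ.filter (fun j => ¬(z j = true) ∧ p j = true)).card := by
          intro p
          congr 1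
          apply Finset.filter_congr
          intro j _
          cases hzj : z j <;> simp [hzj]
        have r1 : ((univ.filter (fun j => (!z j) = true)) ∩ Wc n w).card
            + ((univ.filter (fun j => z j = true)) ∩ Wc n w).card
            = (Wc n w).card := by
          rw [e3, e3, hneg]
          have := filter_split_card n z (fun j => (w j).1)
          unfold Wc
          omega
        have r2 : ((univ.filter (fun j => (!z j) = true)) ∩ Wt n w).card
            + ((univ.filter (fun j => z j = true)) ∩ Wt n w).card
            = (Wt n w).card := by
          rw [e4, e4, hneg]
          have := filter_split_card n z (fun j => (w j).2)
          unfold Wt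
          omega
        rw [ney_eq n w m hm hn] at hzv ⊢
        rw [hsate_m] at hzv ⊢
        have r1R : (((univ.filter (fun j => (!z j) = true)) ∩ Wc n w).card : ℝ)
            = ((Wc n w).card : ℝ)
              - (((univ.filter (fun j => z j = true)) ∩ Wc n w).card : ℝ) := by
          push_cast [← r1]; ring
        have r2R : (((univ.filter (fun j => (!z j) = true)) ∩ Wt n w).card : ℝ)
            = ((Wt n w).card : ℝ)
              - (((univ.filter (fun j => z j = true)) ∩ Wt n w).card : ℝ) := by
          push_cast [← r2]; ring
        rw [r1R, r2R]
        linear_combination -hzv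
    · intro z _
      funext j
      simp
    · intro z _
      funext j
      simp
  constructor
  · intro x _
    exact hsym x
  · intro x y hx hxy hxl hyl
    obtain ⟨kx', hkx'⟩ := hxl
    obtain ⟨ky', hky'⟩ := hyl
    obtain ⟨e2, he2⟩ : ∃ e2 : ℤ, sate n w = (e2:ℝ)/m := by
      rcases h with ⟨h1, h2⟩ | ⟨h1, h2⟩
      · refine ⟨0, ?_⟩
        rw [sate_eq n w, Wt_card, Wc_card, h1, h2]
        norm_num
      · refine ⟨-1, ?_⟩
        rw [sate_eq n w, Wt_card, Wc_card, h1, h2, hnR]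
        push_cast
        field_simp
        ring
    set kx : ℤ := kx' - e2 with hkxdef
    set ky : ℤ := ky' - e2 with hkydef
    have hxval : x = (kx:ℝ)/m := by
      have h1 : sate n w + x = (kx':ℝ)/m := hkx'
      rw [he2] at h1
      push_cast [hkxdef]
      linear_combination h1
    have hyval : y = (ky:ℝ)/m := by
      have h1 : sate n w + y = (ky':ℝ)/m := hky'
      rw [he2] at h1
      push_cast [hkydef]
      linear_combination h1
    have hkx0 : 0 ≤ kx := by
      by_contra hneg
      push_neg at hneg
      have hlt : (kx:ℝ)/m < 0 :=
        div_neg_of_neg_of_pos (by exact_mod_cast hneg) hmR'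
      rw [← hxval] at hlt
      linarith
    have hkxy : kx ≤ ky := by
      have h1 : (kx:ℝ)/m ≤ (ky:ℝ)/m := by
        rw [← hxval, ← hyval]; exact hxy
      have h3 := (div_le_div_iff₀ hmR' hmR').mp h1
      have h2 : (kx:ℝ) ≤ (ky:ℝ) := le_of_mul_le_mul_right h3 hmR'
      exact_mod_cast h2
    have hky0 : 0 ≤ ky := le_trans hkx0 hkxy
    rw [show sate n w + x = sate n w + (kx:ℝ)/m from by rw [hxval],
      show sate n w + y = sate n w + (ky:ℝ)/m from by rw [hyval]]
    rw [hKey kx hkx0, hKey ky hky0]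
    have hmono : MM (Pset n w) (Qset n w) m (a + 1 + ky.toNat)
        ≤ MM (Pset n w) (Qset n w) m (a + 1 + kx.toNat) := by
      rw [MM_eq (hPQ_disj n w) (hPR_disj n w) (hQR_disj n w) (hPQR_univ n w) hq2,
        MM_eq (hPQ_disj n w) (hPR_disj n w) (hQR_disj n w) (hPQR_univ n w) hq2]
      have hPa : (Pset n w).card = a := Pcard n w
      apply Etot_mono (by omega : (Pset n w).card + 2 + (Rset n w).card = 2*m)
      · omega
      · have := Int.toNat_le_toNat hkxy
        omega
    gcongr
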